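/- Let E and F be Fréchet spaces and T : E → F a continuous linear injective operator whose adjoint T* : F* → E* is surjective. If (x_j) is a sequence in E such that T x_j → 0 in F, then x_j → 0 in E. -/

import Mathlib

open Filter Topology Set Pointwise

set_option linter.unusedSectionVars false
set_option maxHeartbeats 1000000

/-- The "polar" of a set `U`: all (not a priori continuous) linear functionals bounded
by `1` on `U`, viewed inside the product space `E → ℂ` with pointwise topology. -/
def polSet {E : Type*} [AddCommGroup E] [Module ℂ E] (U : Set E) : Set (E → ℂ) :=
  {g | IsLinearMap ℂ g ∧ ∀ x ∈ U, ‖g x‖ ≤ 1}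

section Aux

variable {E : Type*} [AddCommGroup E] [Module ℂ E] [TopologicalSpace E] [IsTopologicalAddGroup E]
    [ContinuousSMul ℂ E] [Module ℝ E] [IsScalarTower ℝ ℂ E]

/-- Closed absolutely convex neighborhoods form a basis at `0`. -/
theorem aux_basis [LocallyConvexSpace ℝ E] {W : Set E} (hW : W ∈ 𝓝 (0 : E)) :
    ∃ U ∈ 𝓝 (0 : E), IsClosed U ∧ Balanced ℂ U ∧ Convex ℝ U ∧ U ⊆ W := by
  haveI : ContinuousSMul ℝ E := IsScalarTower.continuousSMul ℂ
  obtain ⟨s, hs, hsc, hsW⟩ := exists_mem_nhds_isClosed_subset hW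
  obtain ⟨C, ⟨hC, hCc⟩, hCs⟩ := (LocallyConvexSpace.convex_basis_zero ℝ E).mem_iff.mp hs
  obtain ⟨S, ⟨hS, hSb, hSc⟩, hSs⟩ :
      ∃ S, (S ∈ 𝓝 (0 : E) ∧ Balanced ℂ S ∧ Convex ℝ S) ∧ S ⊆ s := by
    refine ⟨balancedCore ℂ C, ⟨balancedCore_mem_nhds_zero hC, balancedCore_balanced C, ?_⟩,
      (balancedCore_subset C).trans hCs⟩
    rw [balancedCore_eq_iInter (mem_of_mem_nhds hC)]
    refine convex_iInter₂ fun r _ => ?_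
    rintro _ ⟨u, hu, rfl⟩ _ ⟨v, hv, rfl⟩ a b ha hb hab
    have e : a • r • u + b • r • v = r • (a • u + b • v) := by
      rw [smul_add, smul_comm a r u, smul_comm b r v]
    rw [e]
    exact smul_mem_smul_set (hCc hu hv ha hb hab)
  refine ⟨closure S, mem_of_superset hS subset_closure, isClosed_closure,
    hSb.closure, hSc.closure, (closure_minimal hSs hsc).trans hsW⟩

/-- Uniform bound for elements of the polar of a neighborhood, at a given point. -/
theorem aux_bound {U : Set E} (hU : U ∈ 𝓝 (0 : E)) (y : E) :
    ∃ M : ℝ, 0 ≤ M ∧ ∀ g ∈ polSet U, ‖g y‖ ≤ M := by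
  obtain ⟨r, hr⟩ := absorbs_iff_norm.mp ((absorbent_nhds_zero (𝕜 := ℂ) hU) y)
  obtain ⟨c, hc⟩ : ∃ c : ℂ, r ≤ ‖c‖ := ⟨(max r 0 : ℝ), by
    rw [Complex.norm_real, Real.norm_eq_abs, abs_of_nonneg (le_max_right r 0)]
    exact le_max_left r 0⟩
  obtain ⟨u, hu, huy⟩ : ∃ u ∈ U, c • u = y :=
    Set.mem_smul_set.mp (hr c hc (mem_singleton y))
  refine ⟨‖c‖, norm_nonneg _, fun g hg => ?_⟩
  rw [← huy, hg.1.map_smul, norm_smul]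
  calc ‖c‖ * ‖g u‖ ≤ ‖c‖ * 1 := mul_le_mul_of_nonneg_left (hg.2 u hu) (norm_nonneg c)
    _ = ‖c‖ := mul_one _

/-- A linear functional bounded on a neighborhood of `0` is continuous. -/
theorem aux_cont {U : Set E} (hU : U ∈ 𝓝 (0 : E)) {g : E → ℂ}
    (hlin : IsLinearMap ℂ g) (hb : ∀ x ∈ U, ‖g x‖ ≤ 1) : Continuous g := by
  have h0 : ContinuousAt ((IsLinearMap.mk' g hlin).toAddMonoidHom) 0 := by
    rw [ContinuousAt, map_zero, Metric.tendsto_nhds]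
    intro ε hε
    have hc : ((ε / 2 : ℝ) : ℂ) ≠ 0 := by
      simp only [ne_eq, Complex.ofReal_eq_zero]; positivity
    have hmem : ((ε / 2 : ℝ) : ℂ) • U ∈ 𝓝 (0 : E) :=
      (set_smul_mem_nhds_zero_iff hc).mpr hU
    filter_upwards [hmem] with x hx
    obtain ⟨u, hu, rfl⟩ := Set.mem_smul_set.mp hx
    show dist (g _) 0 < ε
    rw [dist_zero_right, hlin.map_smul, norm_smul, Complex.norm_real, Real.norm_eq_abs,
      abs_of_nonneg (by positivity)]
    calc ε / 2 * ‖g u‖ ≤ ε / 2 * 1 := mul_le_mul_of_nonneg_left (hb u hu) (by positivity)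
      _ < ε := by linarith
  have hcont : Continuous ((IsLinearMap.mk' g hlin).toAddMonoidHom) :=
    continuous_of_continuousAt_zero _ h0
  exact hcont

/-- The polar of a neighborhood of `0` is compact in the topology of pointwise convergence. -/
theorem aux_compact {U : Set E} (hU : U ∈ 𝓝 (0 : E)) : IsCompact (polSet U) := by
  choose M hM0 hM using fun y : E => aux_bound hU y
  have hsub : polSet U ⊆ Set.pi Set.univ fun y => Metric.closedBall (0 : ℂ) (M y) := by
    intro g hg y _
    simpa [Metric.mem_closedBall, dist_zero_right] using hM y g hg
  have hcomp : IsCompact (Set.pi Set.univ fun y => Metric.closedBall (0 : ℂ) (M y)) :=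
    isCompact_univ_pi fun y => isCompact_closedBall 0 (M y)
  refine hcomp.of_isClosed_subset ?_ hsub
  have heq : polSet U = ({g : E → ℂ | ∀ a b, g (a + b) = g a + g b} ∩
      {g : E → ℂ | ∀ (c : ℂ) (a : E), g (c • a) = c • g a}) ∩
      ⋂ a ∈ U, {g : E → ℂ | ‖g a‖ ≤ 1} := by
    ext g
    simp only [polSet, mem_setOf_eq, mem_inter_iff, mem_iInter]
    exact ⟨fun h => ⟨⟨h.1.map_add, h.1.map_smul⟩, h.2⟩, fun h => ⟨⟨h.1.1, h.1.2⟩, h.2⟩⟩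
  rw [heq]
  refine IsClosed.inter (IsClosed.inter ?_ ?_) ?_
  · simp only [setOf_forall]
    refine isClosed_iInter fun a => isClosed_iInter fun b => ?_
    exact isClosed_eq (continuous_apply (a + b)) ((continuous_apply a).add (continuous_apply b))
  · simp only [setOf_forall]
    refine isClosed_iInter fun c => isClosed_iInter fun a => ?_
    exact isClosed_eq (continuous_apply (c • a)) ((continuous_apply a).const_smul c)
  · exact isClosed_biInter fun a _ => isClosed_le ((continuous_apply a).norm) continuous_const

/-- Bipolar theorem, one direction: if all elements of the polar of a closed absolutely
convex set `U` are bounded by `1` at `z`, then `z ∈ U`. -/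
theorem aux_bipolar [LocallyConvexSpace ℝ E] {U : Set E}
    (hUc : IsClosed U) (hUb : Balanced ℂ U) (hUx : Convex ℝ U) (h0 : (0 : E) ∈ U) {z : E}
    (hz : ∀ g ∈ polSet U, ‖g z‖ ≤ 1) : z ∈ U := by
  haveI : ContinuousSMul ℝ E := IsScalarTower.continuousSMul ℂ
  by_contra hzU
  obtain ⟨f, u, hfU, hfz⟩ := geometric_hahn_banach_closed_point hUx hUc hzU
  have hu0 : 0 < u := by simpa using hfU 0 h0
  set f' : E →L[ℝ] ℝ := u⁻¹ • f with hf'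
  have hfU' : ∀ a ∈ U, f' a < 1 := by
    intro a ha
    have : u⁻¹ * f a < u⁻¹ * u := by
      exact mul_lt_mul_of_pos_left (hfU a ha) (by positivity)
    simpa [hf', inv_mul_cancel₀ (ne_of_gt hu0)] using this
  have hfz' : 1 < f' z := by
    have : u⁻¹ * u < u⁻¹ * f z := mul_lt_mul_of_pos_left hfz (by positivity)
    simpa [hf', inv_mul_cancel₀ (ne_of_gt hu0)] using this
  set g : E → ℂ := fun a => (f' a : ℂ) - Complex.I * (f' (Complex.I • a) : ℂ) with hg
  have hre : ∀ a, (g a).re = f' a := by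
    intro a; simp [hg]
  have hadd : ∀ a b, g (a + b) = g a + g b := by
    intro a b
    simp only [hg, smul_add, map_add]
    push_cast; ring
  have hrsmul : ∀ (r : ℝ) (a : E), g (r • a) = (r : ℂ) * g a := by
    intro r a
    have h1 : Complex.I • r • a = r • Complex.I • a := smul_comm _ _ _
    simp only [hg, h1, map_smul, smul_eq_mul]
    push_cast; ring
  have hIsmul : ∀ a, g (Complex.I • a) = Complex.I * g a := by
    intro a
    have h1 : Complex.I • Complex.I • a = -a := by
      rw [← mul_smul, Complex.I_mul_I, neg_one_smul]
    simp only [hg, h1, map_neg]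
    have h2 : (Complex.I * (f' a : ℂ)) * Complex.I = -(f' a : ℂ) := by
      rw [mul_comm, ← mul_assoc, Complex.I_mul_I]; ring
    push_cast; ring_nf
    rw [Complex.I_sq]; ring
  have hlin : IsLinearMap ℂ g := by
    refine ⟨hadd, fun c a => ?_⟩
    have hc : c • a = (c.re : ℝ) • a + (c.im : ℝ) • Complex.I • a := by
      rw [← algebraMap_smul ℂ c.re a, ← algebraMap_smul ℂ c.im (Complex.I • a),
        Complex.coe_algebraMap, ← mul_smul, ← add_smul,
        Complex.re_add_im]
    rw [hc, hadd, hrsmul, hrsmul, hIsmul, smul_eq_mul]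
    conv_rhs => rw [← Complex.re_add_im c]
    ring
  have hgpol : g ∈ polSet U := by
    refine ⟨hlin, fun a ha => ?_⟩
    rcases eq_or_ne (g a) 0 with h | h
    · simp [h]
    · set c : ℂ := (‖g a‖ : ℂ) / g a with hcdef
      have hcn : ‖c‖ = 1 := by
        rw [hcdef, norm_div, Complex.norm_real, norm_norm, div_self (norm_ne_zero_iff.mpr h)]
      have hca : c • a ∈ U := hUb.smul_mem (le_of_eq hcn) ha
      have hgc : g (c • a) = (‖g a‖ : ℂ) := by
        rw [hlin.map_smul, smul_eq_mul, hcdef, div_mul_cancel₀ _ h]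
      have : ‖g a‖ = f' (c • a) := by
        rw [← hre (c • a), hgc, Complex.ofReal_re]
      rw [this]
      exact le_of_lt (hfU' _ hca)
  have h1 : ‖g z‖ ≤ 1 := hz g hgpol
  have h2 : (1 : ℝ) < ‖g z‖ := by
    calc (1 : ℝ) < f' z := hfz'
      _ = (g z).re := (hre z).symm
      _ ≤ ‖g z‖ := Complex.re_le_norm (g z)
  linarith

end Aux

/-- If `T : E → F` is a continuous linear injective operator between Fréchet
spaces whose adjoint `T* : F* → E*`, `T*μ = μ ∘ T`, is surjective, and `(x_j)` is a sequence
in `E` with `T x_j → 0`, then `x_j → 0`. -/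
theorem tendsto_zero_of_adjoint_surjective
    {E F : Type*}
    [AddCommGroup E] [Module ℂ E] [UniformSpace E] [IsUniformAddGroup E]
    [ContinuousSMul ℂ E] [CompleteSpace E] [TopologicalSpace.MetrizableSpace E]
    [Module ℝ E] [IsScalarTower ℝ ℂ E] [LocallyConvexSpace ℝ E]
    [AddCommGroup F] [Module ℂ F] [UniformSpace F] [IsUniformAddGroup F]
    [ContinuousSMul ℂ F] [CompleteSpace F] [TopologicalSpace.MetrizableSpace F]
    [Module ℝ F] [IsScalarTower ℝ ℂ F] [LocallyConvexSpace ℝ F]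
    (T : E →L[ℂ] F) (hinj : Function.Injective T)
    (hsurj : ∀ lam : E →L[ℂ] ℂ, ∃ μ : F →L[ℂ] ℂ, μ.comp T = lam)
    (x : ℕ → E) (hx : Tendsto (fun j => T (x j)) atTop (nhds 0)) :
    Tendsto x atTop (nhds 0) := by
  rw [tendsto_def]
  intro W hW
  obtain ⟨U, hU, hUc, hUb, hUx, hUW⟩ := aux_basis hW
  -- countable basis of neighborhoods of 0 in F, refined to closed absolutely convex sets
  obtain ⟨b, hb⟩ := (𝓝 (0 : F)).exists_antitone_basis
  choose V hV hVcl hVb hVx hVsub using fun n => aux_basis (hb.mem n)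
  -- the compact "polar" sets
  have hPU : IsCompact (polSet U) := aux_compact hU
  set K : ℕ → Set (E → ℂ) := fun n => (fun μ : F → ℂ => μ ∘ T) '' polSet (V n) with hK
  have hKcomp : ∀ n, IsCompact (K n) :=
    fun n => (aux_compact (hV n)).image (continuous_pi fun z => continuous_apply (T z))
  -- every element of the polar of U lies in some K n
  have hcover : ∀ g ∈ polSet U, ∃ n, g ∈ K n := by
    intro g hg
    have hcont : Continuous g := aux_cont hU hg.1 hg.2
    obtain ⟨μ, hμ⟩ := hsurj ⟨IsLinearMap.mk' g hg.1, hcont⟩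
    have hμ1 : ⇑μ ⁻¹' Metric.closedBall 0 1 ∈ 𝓝 (0 : F) := by
      have := μ.continuous.continuousAt (x := (0 : F))
      rw [ContinuousAt, map_zero] at this
      exact this (Metric.closedBall_mem_nhds 0 one_pos)
    obtain ⟨n, hn⟩ := hb.mem_iff.mp hμ1
    refine ⟨n, ⟨⇑μ, ⟨⟨fun a b' => map_add μ a b', fun c y => map_smul μ c y⟩, fun y hy => ?_⟩, ?_⟩⟩
    · have : μ y ∈ Metric.closedBall (0 : ℂ) 1 := hn (hVsub n hy)
      simpa [Metric.mem_closedBall, dist_zero_right] using this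
    · exact funext fun z => DFunLike.congr_fun hμ z
  -- Baire category on the compact polar of U
  haveI : CompactSpace (polSet U) := isCompact_iff_compactSpace.mp hPU
  haveI : Nonempty (polSet U) := ⟨⟨0, ⟨⟨by simp, by simp⟩, fun a _ => by simp⟩⟩⟩
  have hclosed : ∀ n, IsClosed ((Subtype.val : polSet U → E → ℂ) ⁻¹' K n) :=
    fun n => ((hKcomp n).isClosed).preimage continuous_subtype_val
  have hUnion : (⋃ n, ((Subtype.val : polSet U → E → ℂ) ⁻¹' K n)) = univ := by
    rw [eq_univ_iff_forall]
    intro gs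
    rw [mem_iUnion]
    exact hcover gs gs.2
  obtain ⟨n, g₀s, hg₀s⟩ := (nonempty_interior_of_iUnion_of_closed hclosed hUnion).imp
    (fun n h => h)
  rw [mem_interior_iff_mem_nhds] at hg₀s
  obtain ⟨O, hO, hOsub⟩ := (mem_nhds_subtype _ _ _).mp hg₀s
  set g₀ : E → ℂ := ↑g₀s with hg₀def
  have hg₀pol : g₀ ∈ polSet U := g₀s.2
  have hg₀O : g₀ ∈ O := mem_of_mem_nhds hO
  -- extract a basic product-topology neighborhood
  rw [nhds_pi, Filter.mem_pi] at hO
  obtain ⟨I, hIfin, Vc, hVc, hIsub⟩ := hO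
  choose M hM0 hM using fun y : E => aux_bound hU y
  choose ε hε hball using fun y : E => Metric.mem_nhds_iff.mp (hVc y)
  -- a uniform convex-combination parameter t
  set s : Finset E := hIfin.toFinset with hs
  set t : ℝ := min (1 / 2)
    (if hsne : s.Nonempty then s.inf' hsne (fun y => ε y / (2 * M y + 1)) else 1) with ht
  have ht0 : 0 < t := by
    rw [ht]
    apply lt_min (by norm_num)
    split_ifs with hsne
    · rw [Finset.lt_inf'_iff]
      intro y hy
      exact div_pos (hε y) (by nlinarith [hM0 y])
    · norm_num
  have ht1 : t ≤ 1 / 2 := min_le_left _ _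
  have htle : ∀ y ∈ I, t ≤ ε y / (2 * M y + 1) := by
    intro y hy
    have hyne : s.Nonempty := ⟨y, hIfin.mem_toFinset.mpr hy⟩
    calc t ≤ _ := min_le_right _ _
      _ ≤ ε y / (2 * M y + 1) := by
        rw [dif_pos hyne]
        exact Finset.inf'_le _ (hIfin.mem_toFinset.mpr hy)
  -- main claim: everything in the polar of U factors through T with a uniform bound
  have hmain : ∀ g ∈ polSet U, ∃ μ : F → ℂ, IsLinearMap ℂ μ ∧
      (∀ y ∈ V n, ‖μ y‖ ≤ 2 / t) ∧ ∀ z, μ (T z) = g z := by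
    intro g hg
    set gt : E → ℂ := fun z => ((1 - t : ℝ) : ℂ) * g₀ z + ((t : ℝ) : ℂ) * g z with hgt
    have hgtpol : gt ∈ polSet U := by
      constructor
      · refine ⟨fun a b' => ?_, fun c a => ?_⟩
        · simp only [hgt, hg.1.map_add, hg₀pol.1.map_add]; ring
        · simp only [hgt, hg.1.map_smul, hg₀pol.1.map_smul, smul_eq_mul]; ring
      · intro a ha
        calc ‖gt a‖ ≤ ‖((1 - t : ℝ) : ℂ) * g₀ a‖ + ‖((t : ℝ) : ℂ) * g a‖ := norm_add_le _ _
          _ = (1 - t) * ‖g₀ a‖ + t * ‖g a‖ := by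
            rw [norm_mul, norm_mul, Complex.norm_real, Complex.norm_real, Real.norm_eq_abs,
              Real.norm_eq_abs, abs_of_nonneg (by linarith), abs_of_nonneg (by linarith)]
          _ ≤ (1 - t) * 1 + t * 1 := by
            have h1 := hg₀pol.2 a ha
            have h2 := hg.2 a ha
            have : (0:ℝ) ≤ 1 - t := by linarith
            gcongr
          _ = 1 := by ring
    have hgtO : gt ∈ O := by
      apply hIsub
      intro y hy
      apply hball y
      rw [Metric.mem_ball, dist_eq_norm]
      have he : gt y - g₀ y = ((t : ℝ) : ℂ) * (g y - g₀ y) := by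
        simp only [hgt]; push_cast; ring
      rw [he, norm_mul, Complex.norm_real, Real.norm_eq_abs, abs_of_nonneg (le_of_lt ht0)]
      have hb1 : ‖g y - g₀ y‖ ≤ 2 * M y := by
        calc ‖g y - g₀ y‖ ≤ ‖g y‖ + ‖g₀ y‖ := norm_sub_le _ _
          _ ≤ M y + M y := add_le_add (hM y g hg) (hM y g₀ hg₀pol)
          _ = 2 * M y := by ring
      have hty := htle y hy
      have h2M : t * (2 * M y + 1) ≤ ε y := (le_div_iff₀ (by have := hM0 y; positivity)).mp hty
      calc t * ‖g y - g₀ y‖ ≤ t * (2 * M y) := by gcongr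
        _ < ε y := by nlinarith [hε y]
    have hgtK : gt ∈ K n := hOsub (show (⟨gt, hgtpol⟩ : polSet U) ∈ _ from hgtO)
    have hg₀K : g₀ ∈ K n := hOsub (show g₀s ∈ _ from hg₀O)
    obtain ⟨μt, hμtpol, hμtT⟩ := hgtK
    obtain ⟨μ₀, hμ₀pol, hμ₀T⟩ := hg₀K
    have htne : ((t : ℝ) : ℂ) ≠ 0 := by
      simp only [ne_eq, Complex.ofReal_eq_zero]; exact ne_of_gt ht0
    refine ⟨fun y => ((t : ℝ) : ℂ)⁻¹ * (μt y - ((1 - t : ℝ) : ℂ) * μ₀ y), ⟨⟨fun a b' => ?_,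
      fun c y => ?_⟩, fun y hy => ?_, fun z => ?_⟩⟩
    · simp only [hμtpol.1.map_add, hμ₀pol.1.map_add]; ring
    · simp only [hμtpol.1.map_smul, hμ₀pol.1.map_smul, smul_eq_mul]; ring
    · have h1 := hμtpol.2 y hy
      have h2 := hμ₀pol.2 y hy
      calc ‖((t : ℝ) : ℂ)⁻¹ * (μt y - ((1 - t : ℝ) : ℂ) * μ₀ y)‖
          = t⁻¹ * ‖μt y - ((1 - t : ℝ) : ℂ) * μ₀ y‖ := by
            rw [norm_mul, norm_inv, Complex.norm_real, Real.norm_eq_abs,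
              abs_of_nonneg (le_of_lt ht0)]
        _ ≤ t⁻¹ * (‖μt y‖ + (1 - t) * ‖μ₀ y‖) := by
            have h3 : ‖μt y - ((1 - t : ℝ) : ℂ) * μ₀ y‖ ≤ ‖μt y‖ + ‖((1 - t : ℝ) : ℂ) * μ₀ y‖ :=
              norm_sub_le _ _
            have h4 : ‖((1 - t : ℝ) : ℂ) * μ₀ y‖ = (1 - t) * ‖μ₀ y‖ := by
              rw [norm_mul, Complex.norm_real, Real.norm_eq_abs, abs_of_nonneg (by linarith)]
            rw [← h4]
            exact mul_le_mul_of_nonneg_left (by linarith [h3]) (by positivity)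
        _ ≤ t⁻¹ * (1 + (1 - t) * 1) := by
            have : (0:ℝ) ≤ 1 - t := by linarith
            gcongr
        _ ≤ 2 / t := by
            rw [div_eq_inv_mul]
            have : (0:ℝ) < t⁻¹ := by positivity
            nlinarith
    · show ((t : ℝ) : ℂ)⁻¹ * (μt (T z) - ((1 - t : ℝ) : ℂ) * μ₀ (T z)) = g z
      have e1 : μt (T z) = gt z := congrFun hμtT z
      have e2 : μ₀ (T z) = g₀ z := congrFun hμ₀T z
      rw [e1, e2]
      field_simp [hgt]
      simp only [hgt]; ring
  -- conclude
  have hc2 : ((t / 2 : ℝ) : ℂ) ≠ 0 := by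
    simp only [ne_eq, Complex.ofReal_eq_zero]; positivity
  have hmem : ((t / 2 : ℝ) : ℂ) • V n ∈ 𝓝 (0 : F) := (set_smul_mem_nhds_zero_iff hc2).mpr (hV n)
  have hev : ∀ᶠ j in atTop, T (x j) ∈ ((t / 2 : ℝ) : ℂ) • V n := hx.eventually_mem hmem
  filter_upwards [hev] with j hj
  apply hUW
  apply aux_bipolar hUc hUb hUx (mem_of_mem_nhds hU)
  intro g hg
  obtain ⟨μ, hμlin, hμb, hμT⟩ := hmain g hg
  rw [← hμT (x j)]
  obtain ⟨y, hy, hyT⟩ := Set.mem_smul_set.mp hj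
  rw [← hyT, hμlin.map_smul, smul_eq_mul, norm_mul, Complex.norm_real, Real.norm_eq_abs,
    abs_of_nonneg (by positivity)]
  calc t / 2 * ‖μ y‖ ≤ t / 2 * (2 / t) := by gcongr; exact hμb y hy
    _ = 1 := by field_simp
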